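/- Let X^n be the stationary geometric-sticky Markov chain with parameter α and base distribution p. For distinct x, y ∈ X and 2 ≤ m ≤ n−1, the probability that X_m = x, that x appears nowhere else, and that y appears nowhere in X^n equals (1−α)²·p_x·(1−p_x−p_y)²·(1−(1−α)(p_x+p_y))^{n−3}. -/
import Mathlib


open scoped Classical

/-- The probability that the stationary geometric-sticky Markov chain with stickiness
parameter `α` and base distribution `p` (i.e. `X_1 ~ p` and
`Pr(X_i = z | X_{i-1} = y) = α·1[z=y] + (1-α)·p z`) produces the sample path `x`. -/
noncomputable def stickyProb {X : Type*} [DecidableEq X] (α : ℝ) (p : X → ℝ) {n : ℕ}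
    (x : Fin n → X) : ℝ :=
  (if h : 0 < n then p (x ⟨0, h⟩) else 1) *
  ∏ i : Fin n, if i.val = 0 then 1 else
    ((if x i = x ⟨i.val - 1, lt_of_le_of_lt (Nat.pred_le _) i.isLt⟩ then α else 0)
      + (1 - α) * p (x i))

lemma Sticky.snoc_lt {X : Type*} {k : ℕ} (y : Fin k → X) (z : X) (j : Fin (k+1))
    (hj : j.val < k) : (Fin.snoc y z : Fin (k+1) → X) j = y ⟨j.val, hj⟩ := by
  cases j with
  | mk jv hjv => exact Fin.snoc_castSucc (α := fun _ => X) z y ⟨jv, hj⟩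

lemma Sticky.sum_snoc {X : Type*} [Fintype X] (k : ℕ) (f : (Fin (k+1) → X) → ℝ) :
    ∑ x : Fin (k+1) → X, f x = ∑ y : Fin k → X, ∑ z : X, f (Fin.snoc y z) := by
  rw [← (Fin.insertNthEquiv (fun _ => X) (Fin.last k)).sum_comp]
  rw [Fintype.sum_prod_type, Finset.sum_comm]
  congr 1; ext y; congr 1; ext z
  congr 1
  simp [Fin.insertNthEquiv, Fin.insertNth_last]

lemma Sticky.stickyProb_snoc {X : Type*} [DecidableEq X] (α : ℝ) (p : X → ℝ) {k : ℕ}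
    (y : Fin (k+1) → X) (z : X) :
    stickyProb α p (Fin.snoc y z) =
      stickyProb α p y * ((if z = y (Fin.last k) then α else 0) + (1 - α) * p z) := by
  unfold stickyProb
  rw [dif_pos (Nat.succ_pos _), dif_pos (Nat.succ_pos _), Fin.prod_univ_castSucc]
  have e0 : ∀ pf : 0 < k+2, (Fin.snoc y z : Fin (k+2) → X) ⟨0, pf⟩ = y ⟨0, Nat.succ_pos _⟩ :=
    fun _ => Sticky.snoc_lt y z _ (Nat.succ_pos _)
  have ek : ∀ pf : k < k+2, (Fin.snoc y z : Fin (k+2) → X) ⟨k, pf⟩ = y (Fin.last k) :=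
    fun _ => Sticky.snoc_lt y z _ (Nat.lt_succ_self _)
  have em : ∀ (i : Fin (k+1)) (pf : i.val - 1 < k+2),
      (Fin.snoc y z : Fin (k+2) → X) ⟨i.val - 1, pf⟩
        = y ⟨i.val - 1, lt_of_le_of_lt (Nat.pred_le _) i.isLt⟩ :=
    fun i _ => Sticky.snoc_lt y z _ (lt_of_le_of_lt (Nat.pred_le _) i.isLt)
  simp only [Fin.coe_castSucc, Fin.val_last, Fin.snoc_castSucc, Fin.snoc_last,
    Nat.add_sub_cancel, Nat.succ_ne_zero, if_false, e0, ek, em]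
  ring

lemma Sticky.sum_T {X : Type*} [Fintype X] [DecidableEq X] (p : X → ℝ) (a b : X)
    (hsum : ∑ z, p z = 1) (hab : a ≠ b) :
    ∑ z, (if z ≠ a ∧ z ≠ b then p z else 0) = 1 - p a - p b := by
  rw [← Finset.sum_filter]
  have h : Finset.univ.filter (fun z => z ≠ a ∧ z ≠ b) = Finset.univ \ {a, b} := by
    ext z; simp [and_comm]
  rw [h, Finset.sum_sdiff_eq_sub (Finset.subset_univ _), hsum, Finset.sum_pair hab]
  ring

lemma Sticky.trans_sum {X : Type*} [Fintype X] [DecidableEq X] (α : ℝ) (p : X → ℝ) (a b v : X)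
    (hsum : ∑ z, p z = 1) (hab : a ≠ b) :
    ∑ z, (if z ≠ a ∧ z ≠ b then ((if z = v then α else 0) + (1 - α) * p z) else 0)
      = (if v ≠ a ∧ v ≠ b then α else 0) + (1 - α) * (1 - p a - p b) := by
  have key : ∀ z, (if z ≠ a ∧ z ≠ b then ((if z = v then α else 0) + (1 - α) * p z) else 0)
      = (if z = v then (if v ≠ a ∧ v ≠ b then α else 0) else 0)
        + (1 - α) * (if z ≠ a ∧ z ≠ b then p z else 0) := by
    intro z
    by_cases h2 : z = v
    · subst h2; by_cases h : z ≠ a ∧ z ≠ b <;> simp [h]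
    · by_cases h : z ≠ a ∧ z ≠ b <;> simp [h, h2]
  rw [Finset.sum_congr rfl (fun z _ => key z), Finset.sum_add_distrib,
    Finset.sum_ite_eq' Finset.univ v (fun _ => if v ≠ a ∧ v ≠ b then α else 0),
    ← Finset.mul_sum, Sticky.sum_T p a b hsum hab]
  simp

lemma Sticky.forall_snoc_idx {X : Type*} {k : ℕ} {P : ℕ → X → Prop} (y : Fin k → X) (z : X) :
    (∀ i : Fin (k+1), P i.val ((Fin.snoc y z : Fin (k+1) → X) i))
      ↔ (∀ i : Fin k, P i.val (y i)) ∧ P k z := by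
  constructor
  · intro h
    refine ⟨fun i => ?_, ?_⟩
    · simpa using h i.castSucc
    · simpa using h (Fin.last k)
  · rintro ⟨h1, h2⟩ i
    refine Fin.lastCases ?_ (fun j => ?_) i
    · rw [Fin.snoc_last]; exact h2
    · rw [Fin.snoc_castSucc]; exact h1 j

lemma Sticky.sumG {X : Type*} [Fintype X] [DecidableEq X] (α : ℝ) (p : X → ℝ) (a b : X)
    (hsum : ∑ z, p z = 1) (hab : a ≠ b) :
    ∀ k : ℕ, ∑ x : Fin (k+1) → X,
        (if (∀ i, x i ≠ a ∧ x i ≠ b) then stickyProb α p x else 0)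
      = (1 - p a - p b) * (1 - (1 - α) * (p a + p b)) ^ k := by
  intro k
  induction k with
  | zero =>
    rw [← (Equiv.funUnique (Fin 1) X).symm.sum_comp]
    have h1 : ∀ w : X, stickyProb α p (fun _ : Fin 1 => w) = p w := by
      intro w; unfold stickyProb; simp
    have h2 : ∀ w : X,
        (if (∀ i : Fin 1, (fun _ : Fin 1 => w) i ≠ a ∧ (fun _ : Fin 1 => w) i ≠ b)
          then stickyProb α p (fun _ : Fin 1 => w) else 0)
        = (if w ≠ a ∧ w ≠ b then p w else 0) := by
      intro w
      by_cases hw : w ≠ a ∧ w ≠ b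
      · rw [if_pos (fun _ => hw), if_pos hw, h1]
      · rw [if_neg (fun h => hw (h 0)), if_neg hw]
    calc ∑ w : X, (if (∀ i : Fin 1, (fun _ : Fin 1 => w) i ≠ a ∧ (fun _ : Fin 1 => w) i ≠ b)
            then stickyProb α p (fun _ : Fin 1 => w) else 0)
        = ∑ w : X, (if w ≠ a ∧ w ≠ b then p w else 0) := Finset.sum_congr rfl (fun w _ => h2 w)
      _ = 1 - p a - p b := Sticky.sum_T p a b hsum hab
      _ = (1 - p a - p b) * (1 - (1 - α) * (p a + p b)) ^ 0 := by ring
  | succ k ih =>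
    rw [Sticky.sum_snoc (k+1) (fun x => if (∀ i, x i ≠ a ∧ x i ≠ b) then stickyProb α p x else 0)]
    have key : ∀ (y : Fin (k+1) → X) (z : X),
        (if (∀ i : Fin (k+2), (Fin.snoc y z : Fin (k+2) → X) i ≠ a
              ∧ (Fin.snoc y z : Fin (k+2) → X) i ≠ b)
          then stickyProb α p (Fin.snoc y z) else 0)
        = (if (∀ i, y i ≠ a ∧ y i ≠ b) then stickyProb α p y else 0)
            * (if z ≠ a ∧ z ≠ b
                then ((if z = y (Fin.last k) then α else 0) + (1 - α) * p z) else 0) := by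
      intro y z
      have hiff := Sticky.forall_snoc_idx (P := fun _ w => w ≠ a ∧ w ≠ b) y z
      by_cases hy : ∀ i, y i ≠ a ∧ y i ≠ b
      · by_cases hz : z ≠ a ∧ z ≠ b
        · rw [if_pos (hiff.mpr ⟨hy, hz⟩), if_pos hy, if_pos hz, Sticky.stickyProb_snoc]
        · rw [if_neg (fun h => hz (hiff.mp h).2), if_neg hz, mul_zero]
      · rw [if_neg (fun h => hy (hiff.mp h).1), if_neg hy, zero_mul]
    calc ∑ y : Fin (k+1) → X, ∑ z : X,
          (if (∀ i : Fin (k+2), (Fin.snoc y z : Fin (k+2) → X) i ≠ a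
                ∧ (Fin.snoc y z : Fin (k+2) → X) i ≠ b)
            then stickyProb α p (Fin.snoc y z) else 0)
        = ∑ y : Fin (k+1) → X,
            (if (∀ i, y i ≠ a ∧ y i ≠ b) then stickyProb α p y else 0)
              * (1 - (1 - α) * (p a + p b)) := by
          refine Finset.sum_congr rfl (fun y _ => ?_)
          rw [Finset.sum_congr rfl (fun z _ => key y z), ← Finset.mul_sum,
            Sticky.trans_sum α p a b (y (Fin.last k)) hsum hab]
          by_cases hy : ∀ i, y i ≠ a ∧ y i ≠ b
          · rw [if_pos hy, if_pos (hy (Fin.last k))]; ring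
          · rw [if_neg hy, zero_mul, zero_mul]
      _ = (1 - p a - p b) * (1 - (1 - α) * (p a + p b)) ^ (k + 1) := by
          rw [← Finset.sum_mul, ih]; ring
lemma Sticky.sumB {X : Type*} [Fintype X] [DecidableEq X] (α : ℝ) (p : X → ℝ) (a b : X)
    (hsum : ∑ z, p z = 1) (hab : a ≠ b) (k : ℕ) :
    ∑ x : Fin (k+2) → X,
        (if x ⟨k+1, by omega⟩ = a ∧ (∀ i : Fin (k+2), i.val ≠ k+1 → x i ≠ a)
            ∧ (∀ i : Fin (k+2), x i ≠ b)
          then stickyProb α p x else 0)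
      = (1 - p a - p b) * (1 - (1 - α) * (p a + p b)) ^ k * ((1 - α) * p a) := by
  rw [Sticky.sum_snoc (k+1) (fun x => if x ⟨k+1, by omega⟩ = a
      ∧ (∀ i : Fin (k+2), i.val ≠ k+1 → x i ≠ a) ∧ (∀ i : Fin (k+2), x i ≠ b)
        then stickyProb α p x else 0)]
  have key : ∀ (y : Fin (k+1) → X) (z : X),
      (if (Fin.snoc y z : Fin (k+2) → X) ⟨k+1, by omega⟩ = a
          ∧ (∀ i : Fin (k+2), i.val ≠ k+1 → (Fin.snoc y z : Fin (k+2) → X) i ≠ a)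
          ∧ (∀ i : Fin (k+2), (Fin.snoc y z : Fin (k+2) → X) i ≠ b)
        then stickyProb α p (Fin.snoc y z) else 0)
      = (if (∀ i, y i ≠ a ∧ y i ≠ b) then stickyProb α p y else 0)
          * (if z = a then (1 - α) * p a else 0) := by
    intro y z
    have hlast : (Fin.snoc y z : Fin (k+2) → X) ⟨k+1, by omega⟩ = z := by
      have h : (⟨k+1, by omega⟩ : Fin (k+2)) = Fin.last (k+1) := rfl
      rw [h, Fin.snoc_last]
    have ha := Sticky.forall_snoc_idx (P := fun j w => j ≠ k+1 → w ≠ a) y z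
    have hb := Sticky.forall_snoc_idx (P := fun _ w => w ≠ b) y z
    by_cases hz : z = a
    · by_cases hy : ∀ i, y i ≠ a ∧ y i ≠ b
      · rw [if_pos ⟨hlast.trans hz,
          ha.mpr ⟨fun i _ => (hy i).1, fun h => absurd rfl h⟩,
          hb.mpr ⟨fun i => (hy i).2, hz ▸ hab⟩⟩,
          if_pos hy, if_pos hz, Sticky.stickyProb_snoc]
        subst hz
        rw [if_neg (fun h => (hy (Fin.last k)).1 h.symm)]
        ring
      · refine (if_neg (fun h => hy (fun i => ⟨?_, ?_⟩))).trans (by rw [if_neg hy, zero_mul])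
        · exact (ha.mp h.2.1).1 i (by omega)
        · exact (hb.mp h.2.2).1 i
    · rw [if_neg (fun h => hz (hlast.symm.trans h.1)), if_neg hz, mul_zero]
  calc ∑ y : Fin (k+1) → X, ∑ z : X,
        (if (Fin.snoc y z : Fin (k+2) → X) ⟨k+1, by omega⟩ = a
            ∧ (∀ i : Fin (k+2), i.val ≠ k+1 → (Fin.snoc y z : Fin (k+2) → X) i ≠ a)
            ∧ (∀ i : Fin (k+2), (Fin.snoc y z : Fin (k+2) → X) i ≠ b)
          then stickyProb α p (Fin.snoc y z) else 0)
      = ∑ y : Fin (k+1) → X,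
          (if (∀ i, y i ≠ a ∧ y i ≠ b) then stickyProb α p y else 0) * ((1 - α) * p a) := by
        refine Finset.sum_congr rfl (fun y _ => ?_)
        rw [Finset.sum_congr rfl (fun z _ => key y z), ← Finset.mul_sum,
          Finset.sum_ite_eq' Finset.univ a (fun _ => (1 - α) * p a), if_pos (Finset.mem_univ a)]
    _ = (1 - p a - p b) * (1 - (1 - α) * (p a + p b)) ^ k * ((1 - α) * p a) := by
        rw [← Finset.sum_mul, Sticky.sumG α p a b hsum hab k]
lemma Sticky.sumM {X : Type*} [Fintype X] [DecidableEq X] (α : ℝ) (p : X → ℝ) (a b : X)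
    (hsum : ∑ z, p z = 1) (hab : a ≠ b) :
    ∀ (m : ℕ), 2 ≤ m → ∀ n (hn : m + 1 ≤ n),
      (∑ x : Fin n → X,
        (if x ⟨m - 1, by omega⟩ = a ∧ (∀ i : Fin n, i.val ≠ m - 1 → x i ≠ a)
            ∧ (∀ i : Fin n, x i ≠ b)
          then stickyProb α p x else 0))
      = (1 - α) ^ 2 * p a * (1 - p a - p b) ^ 2 * (1 - (1 - α) * (p a + p b)) ^ (n - 3) := by
  intro m hm
  refine Nat.le_induction ?_ ?_
  · -- n = m + 1
    obtain ⟨j, rfl⟩ : ∃ j, m = j + 2 := ⟨m - 2, by omega⟩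
    have hidx : j + 2 - 1 = j + 1 := by omega
    simp only [hidx]
    rw [Sticky.sum_snoc (j+2) (fun x => if x ⟨j + 1, by omega⟩ = a
        ∧ (∀ i : Fin (j+2+1), i.val ≠ j + 1 → x i ≠ a) ∧ (∀ i : Fin (j+2+1), x i ≠ b)
          then stickyProb α p x else 0)]
    have key : ∀ (y : Fin (j+2) → X) (z : X),
        (if (Fin.snoc y z : Fin (j+2+1) → X) ⟨j + 1, by omega⟩ = a
            ∧ (∀ i : Fin (j+2+1), i.val ≠ j + 1 → (Fin.snoc y z : Fin (j+2+1) → X) i ≠ a)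
            ∧ (∀ i : Fin (j+2+1), (Fin.snoc y z : Fin (j+2+1) → X) i ≠ b)
          then stickyProb α p (Fin.snoc y z) else 0)
        = (if y ⟨j + 1, by omega⟩ = a ∧ (∀ i : Fin (j+2), i.val ≠ j + 1 → y i ≠ a)
              ∧ (∀ i : Fin (j+2), y i ≠ b) then stickyProb α p y else 0)
          * (if z ≠ a ∧ z ≠ b
              then ((if z = y (Fin.last (j+1)) then α else 0) + (1 - α) * p z) else 0) := by
      intro y z
      have hm1 : (Fin.snoc y z : Fin (j+2+1) → X) ⟨j + 1, by omega⟩ = y ⟨j + 1, by omega⟩ :=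
        Sticky.snoc_lt y z _ (show j + 1 < j + 2 by omega)
      have ha := Sticky.forall_snoc_idx (P := fun i w => i ≠ j + 1 → w ≠ a) y z
      have hb := Sticky.forall_snoc_idx (P := fun _ w => w ≠ b) y z
      by_cases hy : y ⟨j + 1, by omega⟩ = a ∧ (∀ i : Fin (j+2), i.val ≠ j + 1 → y i ≠ a)
          ∧ (∀ i : Fin (j+2), y i ≠ b)
      · by_cases hz : z ≠ a ∧ z ≠ b
        · rw [if_pos ⟨hm1.trans hy.1, ha.mpr ⟨hy.2.1, fun _ => hz.1⟩, hb.mpr ⟨hy.2.2, hz.2⟩⟩,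
            if_pos hy, if_pos hz, Sticky.stickyProb_snoc]
        · rw [if_neg (fun h => hz ⟨(ha.mp h.2.1).2 (by omega), (hb.mp h.2.2).2⟩),
            if_neg hz, mul_zero]
      · rw [if_neg (fun h => hy ⟨hm1.symm.trans h.1, (ha.mp h.2.1).1, (hb.mp h.2.2).1⟩),
          if_neg hy, zero_mul]
    calc ∑ y : Fin (j+2) → X, ∑ z : X,
          (if (Fin.snoc y z : Fin (j+2+1) → X) ⟨j + 1, by omega⟩ = a
              ∧ (∀ i : Fin (j+2+1), i.val ≠ j + 1 → (Fin.snoc y z : Fin (j+2+1) → X) i ≠ a)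
              ∧ (∀ i : Fin (j+2+1), (Fin.snoc y z : Fin (j+2+1) → X) i ≠ b)
            then stickyProb α p (Fin.snoc y z) else 0)
        = ∑ y : Fin (j+2) → X,
            (if y ⟨j + 1, by omega⟩ = a ∧ (∀ i : Fin (j+2), i.val ≠ j + 1 → y i ≠ a)
                ∧ (∀ i : Fin (j+2), y i ≠ b) then stickyProb α p y else 0)
              * ((1 - α) * (1 - p a - p b)) := by
          refine Finset.sum_congr rfl (fun y _ => ?_)
          rw [Finset.sum_congr rfl (fun z _ => key y z), ← Finset.mul_sum,
            Sticky.trans_sum α p a b (y (Fin.last (j+1))) hsum hab]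
          by_cases hy : y ⟨j + 1, by omega⟩ = a ∧ (∀ i : Fin (j+2), i.val ≠ j + 1 → y i ≠ a)
              ∧ (∀ i : Fin (j+2), y i ≠ b)
          · rw [if_neg (fun h : y (Fin.last (j+1)) ≠ a ∧ y (Fin.last (j+1)) ≠ b => h.1 hy.1),
              zero_add]
          · rw [if_neg hy, zero_mul, zero_mul]
      _ = (1 - α) ^ 2 * p a * (1 - p a - p b) ^ 2
            * (1 - (1 - α) * (p a + p b)) ^ (j + 2 + 1 - 3) := by
          rw [← Finset.sum_mul, Sticky.sumB α p a b hsum hab j]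
          have h3 : j + 2 + 1 - 3 = j := by omega
          rw [h3]; ring
  · -- step n → n+1
    intro n hn ih
    obtain ⟨n', rfl⟩ : ∃ n', n = n' + 1 := ⟨n - 1, by omega⟩
    rw [Sticky.sum_snoc (n'+1) (fun x => if x ⟨m - 1, by omega⟩ = a
        ∧ (∀ i : Fin (n'+1+1), i.val ≠ m - 1 → x i ≠ a) ∧ (∀ i : Fin (n'+1+1), x i ≠ b)
          then stickyProb α p x else 0)]
    have key : ∀ (y : Fin (n'+1) → X) (z : X),
        (if (Fin.snoc y z : Fin (n'+1+1) → X) ⟨m - 1, by omega⟩ = a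
            ∧ (∀ i : Fin (n'+1+1), i.val ≠ m - 1 → (Fin.snoc y z : Fin (n'+1+1) → X) i ≠ a)
            ∧ (∀ i : Fin (n'+1+1), (Fin.snoc y z : Fin (n'+1+1) → X) i ≠ b)
          then stickyProb α p (Fin.snoc y z) else 0)
        = (if y ⟨m - 1, by omega⟩ = a ∧ (∀ i : Fin (n'+1), i.val ≠ m - 1 → y i ≠ a)
              ∧ (∀ i : Fin (n'+1), y i ≠ b) then stickyProb α p y else 0)
          * (if z ≠ a ∧ z ≠ b
              then ((if z = y (Fin.last n') then α else 0) + (1 - α) * p z) else 0) := by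
      intro y z
      have hm1 : (Fin.snoc y z : Fin (n'+1+1) → X) ⟨m - 1, by omega⟩ = y ⟨m - 1, by omega⟩ :=
        Sticky.snoc_lt y z _ (show m - 1 < n' + 1 by omega)
      have ha := Sticky.forall_snoc_idx (P := fun i w => i ≠ m - 1 → w ≠ a) y z
      have hb := Sticky.forall_snoc_idx (P := fun _ w => w ≠ b) y z
      by_cases hy : y ⟨m - 1, by omega⟩ = a ∧ (∀ i : Fin (n'+1), i.val ≠ m - 1 → y i ≠ a)
          ∧ (∀ i : Fin (n'+1), y i ≠ b)
      · by_cases hz : z ≠ a ∧ z ≠ b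
        · rw [if_pos ⟨hm1.trans hy.1, ha.mpr ⟨hy.2.1, fun _ => hz.1⟩, hb.mpr ⟨hy.2.2, hz.2⟩⟩,
            if_pos hy, if_pos hz, Sticky.stickyProb_snoc]
        · rw [if_neg (fun h => hz ⟨(ha.mp h.2.1).2 (by omega), (hb.mp h.2.2).2⟩),
            if_neg hz, mul_zero]
      · rw [if_neg (fun h => hy ⟨hm1.symm.trans h.1, (ha.mp h.2.1).1, (hb.mp h.2.2).1⟩),
          if_neg hy, zero_mul]
    calc ∑ y : Fin (n'+1) → X, ∑ z : X,
          (if (Fin.snoc y z : Fin (n'+1+1) → X) ⟨m - 1, by omega⟩ = a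
              ∧ (∀ i : Fin (n'+1+1), i.val ≠ m - 1 → (Fin.snoc y z : Fin (n'+1+1) → X) i ≠ a)
              ∧ (∀ i : Fin (n'+1+1), (Fin.snoc y z : Fin (n'+1+1) → X) i ≠ b)
            then stickyProb α p (Fin.snoc y z) else 0)
        = ∑ y : Fin (n'+1) → X,
            (if y ⟨m - 1, by omega⟩ = a ∧ (∀ i : Fin (n'+1), i.val ≠ m - 1 → y i ≠ a)
                ∧ (∀ i : Fin (n'+1), y i ≠ b) then stickyProb α p y else 0)
              * (1 - (1 - α) * (p a + p b)) := by
          refine Finset.sum_congr rfl (fun y _ => ?_)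
          rw [Finset.sum_congr rfl (fun z _ => key y z), ← Finset.mul_sum,
            Sticky.trans_sum α p a b (y (Fin.last n')) hsum hab]
          by_cases hy : y ⟨m - 1, by omega⟩ = a ∧ (∀ i : Fin (n'+1), i.val ≠ m - 1 → y i ≠ a)
              ∧ (∀ i : Fin (n'+1), y i ≠ b)
          · rw [if_pos (⟨hy.2.1 (Fin.last n') (by simp; omega), hy.2.2 (Fin.last n')⟩ :
              y (Fin.last n') ≠ a ∧ y (Fin.last n') ≠ b)]
            ring
          · rw [if_neg hy, zero_mul, zero_mul]
      _ = (1 - α) ^ 2 * p a * (1 - p a - p b) ^ 2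
            * (1 - (1 - α) * (p a + p b)) ^ (n' + 1 + 1 - 3) := by
          rw [← Finset.sum_mul, ih]
          have h3 : n' + 1 + 1 - 3 = (n' + 1 - 3) + 1 := by omega
          rw [h3]; ring

/-- For the stationary geometric-sticky Markov chain of length `n`, distinct letters
`a ≠ b`, and `2 ≤ m ≤ n-1`, the probability that `X_m = a`, that `a` appears nowhere else,
and that `b` appears nowhere equals
`(1-α)² p_a (1-p_a-p_b)² (1-(1-α)(p_a+p_b))^(n-3)`. -/
theorem sticky_prob_singleton_other_absent
    {X : Type*} [Fintype X] [DecidableEq X] (α : ℝ) (hα0 : 0 ≤ α) (hα1 : α < 1)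
    (p : X → ℝ) (hp : ∀ z, 0 ≤ p z) (hsum : ∑ z, p z = 1)
    (n : ℕ) (hn : 3 ≤ n) (m : ℕ) (hm1 : 2 ≤ m) (hm2 : m ≤ n - 1) (a b : X) (hab : a ≠ b) :
    ∑ x : Fin n → X,
        (if x ⟨m - 1, by omega⟩ = a ∧ (∀ i : Fin n, i.val ≠ m - 1 → x i ≠ a) ∧
            (∀ i : Fin n, x i ≠ b)
          then stickyProb α p x else 0)
      = (1 - α) ^ 2 * p a * (1 - p a - p b) ^ 2 * (1 - (1 - α) * (p a + p b)) ^ (n - 3) :=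
  Sticky.sumM α p a b hsum hab m hm1 n (by omega)
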